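/- For |q|<1 and nonzero y, z with y + 1/y ≠ z + 1/z (and denominators nonzero): ∑_{n≥1} q^n (qy;q)_{n-1} (q/y;q)_{n-1} / ((qz;q)_n (q/z;q)_n) = (1/(y + y^{-1} - z - z^{-1})) · (1 - (qy;q)_∞ (q/y;q)_∞ / ((qz;q)_∞ (q/z;q)_∞)). -/

import Mathlib

open scoped BigOperators

noncomputable def qPoch (a q : ℂ) (n : ℕ) : ℂ := ∏ j ∈ Finset.range n, (1 - a * q ^ j)

noncomputable def qPochInf (a q : ℂ) : ℂ := ∏' j : ℕ, (1 - a * q ^ j)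

lemma summable_log_qfac (a q : ℂ) (hq : ‖q‖ < 1) :
    Summable (fun n : ℕ => Complex.log (1 - a * q ^ n)) := by
  have hg : Summable (fun n : ℕ => (3/2 : ℝ) * (‖a‖ * ‖q‖ ^ n)) :=
    ((summable_geometric_of_lt_one (norm_nonneg q) hq).mul_left ‖a‖).mul_left _
  apply Summable.of_norm_bounded_eventually hg
  rw [Nat.cofinite_eq_atTop]
  have ht : Filter.Tendsto (fun n : ℕ => ‖a‖ * ‖q‖ ^ n) Filter.atTop (nhds 0) := by
    simpa using (tendsto_pow_atTop_nhds_zero_of_norm_lt_one (x := ‖q‖) (by simpa using hq)).const_mul ‖a‖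
  filter_upwards [ht.eventually_le_const (by norm_num : (0:ℝ) < 1/2)] with n hn
  have hb : ‖-(a * q ^ n)‖ ≤ 1/2 := by
    rw [norm_neg, norm_mul, norm_pow]; exact hn
  calc ‖Complex.log (1 - a * q ^ n)‖ = ‖Complex.log (1 + -(a * q ^ n))‖ := by
        rw [sub_eq_add_neg]
    _ ≤ 3/2 * ‖-(a * q ^ n)‖ := Complex.norm_log_one_add_half_le_self hb
    _ = 3/2 * (‖a‖ * ‖q‖ ^ n) := by rw [norm_neg, norm_mul, norm_pow]

lemma hasProd_qfac (a q : ℂ) (hq : ‖q‖ < 1) :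
    HasProd (fun j : ℕ => 1 - a * q ^ j) (qPochInf a q) := by
  by_cases h : ∀ j : ℕ, 1 - a * q ^ j ≠ 0
  · exact (Complex.hasProd_of_hasSum_log h (summable_log_qfac a q hq).hasSum).multipliable.hasProd
  · push_neg at h
    obtain ⟨j0, hj0⟩ := h
    have h0 : HasProd (fun j : ℕ => 1 - a * q ^ j) 0 := by
      rw [HasProd]
      apply Filter.Tendsto.congr' _ tendsto_const_nhds
      filter_upwards [Filter.eventually_ge_atTop ({j0} : Finset ℕ)] with s hs
      exact (Finset.prod_eq_zero (hs (Finset.mem_singleton_self j0)) hj0).symm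
    rw [qPochInf, h0.tprod_eq]
    exact h0

lemma tendsto_qPoch (a q : ℂ) (hq : ‖q‖ < 1) :
    Filter.Tendsto (fun n => qPoch a q n) Filter.atTop (nhds (qPochInf a q)) :=
  (hasProd_qfac a q hq).tendsto_prod_nat

theorem stmt_18 (q y z : ℂ) (hq : ‖q‖ < 1) (hy : y ≠ 0) (hz : z ≠ 0)
    (hne : y + y⁻¹ ≠ z + z⁻¹)
    (hden : ∀ n : ℕ, qPoch (q * z) q n * qPoch (q / z) q n ≠ 0)
    (hdenInf : qPochInf (q * z) q * qPochInf (q / z) q ≠ 0) :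
    (∑' n : ℕ, q ^ (n + 1) * qPoch (q * y) q n * qPoch (q / y) q n /
        (qPoch (q * z) q (n + 1) * qPoch (q / z) q (n + 1))) =
      1 / (y + y⁻¹ - z - z⁻¹) *
        (1 - qPochInf (q * y) q * qPochInf (q / y) q /
          (qPochInf (q * z) q * qPochInf (q / z) q)) := by
  set c : ℂ := y + y⁻¹ - z - z⁻¹ with hc_def
  have hc : c ≠ 0 := by
    rw [hc_def, sub_sub, sub_ne_zero]
    exact hne
  set N : ℕ → ℂ := fun n => qPoch (q * y) q n * qPoch (q / y) q n with hN
  set D : ℕ → ℂ := fun n => qPoch (q * z) q n * qPoch (q / z) q n with hD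
  set NL : ℂ := qPochInf (q * y) q * qPochInf (q / y) q with hNL
  set DL : ℂ := qPochInf (q * z) q * qPochInf (q / z) q with hDL
  have htN : Filter.Tendsto N Filter.atTop (nhds NL) :=
    (tendsto_qPoch _ q hq).mul (tendsto_qPoch _ q hq)
  have htD : Filter.Tendsto D Filter.atTop (nhds DL) :=
    (tendsto_qPoch _ q hq).mul (tendsto_qPoch _ q hq)
  set term : ℕ → ℂ := fun n => q ^ (n + 1) * qPoch (q * y) q n * qPoch (q / y) q n /
      (qPoch (q * z) q (n + 1) * qPoch (q / z) q (n + 1)) with hterm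
  set a : ℕ → ℂ := fun n => N n / D n with ha
  -- pointwise identity: a n - a (n+1) = c * term n
  have key : ∀ n : ℕ, a n - a (n + 1) = c * term n := by
    intro n
    have hDn : D n ≠ 0 := hden n
    have hDn1 : D (n + 1) ≠ 0 := hden (n + 1)
    set fy : ℂ := (1 - (q*y) * q ^ n) * (1 - (q/y) * q ^ n) with hfy_def
    set fz : ℂ := (1 - (q*z) * q ^ n) * (1 - (q/z) * q ^ n) with hfz_def
    have eN : N (n + 1) = N n * fy := by
      show qPoch (q*y) q (n+1) * qPoch (q/y) q (n+1) = _
      rw [qPoch, qPoch, Finset.prod_range_succ, Finset.prod_range_succ]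
      show _ = qPoch (q*y) q n * qPoch (q/y) q n * fy
      rw [qPoch, qPoch, hfy_def]; ring
    have eD : D (n + 1) = D n * fz := by
      show qPoch (q*z) q (n+1) * qPoch (q/z) q (n+1) = _
      rw [qPoch, qPoch, Finset.prod_range_succ, Finset.prod_range_succ]
      show _ = qPoch (q*z) q n * qPoch (q/z) q n * fz
      rw [qPoch, qPoch, hfz_def]; ring
    have hfz : fz ≠ 0 := by
      intro h0
      exact hDn1 (by rw [eD, h0, mul_zero])
    have hdiff : fz - fy = c * q ^ (n + 1) := by
      rw [hfy_def, hfz_def, hc_def]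
      field_simp
      ring
    have step1 : a n - a (n + 1) = (N n * fz - N n * fy) / (D n * fz) := by
      show N n / D n - N (n+1) / D (n+1) = _
      rw [eN, eD, sub_div, mul_div_mul_right _ _ hfz]
    have step2 : (N n * fz - N n * fy) / (D n * fz) = c * (q ^ (n+1) * N n / (D n * fz)) := by
      rw [← mul_sub, hdiff]; ring
    rw [step1, step2]
    have : term n = q ^ (n+1) * N n / (D n * fz) := by
      show q ^ (n + 1) * qPoch (q * y) q n * qPoch (q / y) q n /
        (qPoch (q * z) q (n + 1) * qPoch (q / z) q (n + 1)) = _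
      rw [show qPoch (q * z) q (n + 1) * qPoch (q / z) q (n + 1) = D n * fz from eD]
      show _ = q ^ (n+1) * (qPoch (q*y) q n * qPoch (q/y) q n) / (D n * fz)
      ring
    rw [this]
  -- bounds
  obtain ⟨K, hK⟩ : ∃ K : ℝ, ∀ n, ‖N n‖ ≤ K := by
    obtain ⟨K, hK⟩ := (htN.norm.bddAbove_range)
    exact ⟨K, fun n => hK ⟨n, rfl⟩⟩
  obtain ⟨M, hM⟩ : ∃ M : ℝ, ∀ n, ‖D n‖⁻¹ ≤ M := by
    have hinv : Filter.Tendsto (fun n => ‖D n‖⁻¹) Filter.atTop (nhds ‖DL‖⁻¹) :=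
      (htD.norm.inv₀ (by simpa using hdenInf))
    obtain ⟨M, hM⟩ := hinv.bddAbove_range
    exact ⟨M, fun n => hM ⟨n, rfl⟩⟩
  have hKM : ∀ n, ‖term n‖ ≤ K * M * ‖q‖ ^ (n + 1) := by
    intro n
    have hK0 : (0:ℝ) ≤ K := le_trans (norm_nonneg _) (hK 0)
    have hterm_eq : term n = q ^ (n+1) * N n / D (n+1) := by
      rw [hterm, hN, hD]; simp only []; ring
    rw [hterm_eq]
    rw [norm_div, norm_mul, norm_pow]
    rw [div_eq_mul_inv]
    calc ‖q‖ ^ (n+1) * ‖N n‖ * ‖D (n+1)‖⁻¹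
        ≤ ‖q‖ ^ (n+1) * K * M := by
          apply mul_le_mul
          · exact mul_le_mul_of_nonneg_left (hK n) (by positivity)
          · exact hM (n+1)
          · positivity
          · positivity
      _ = K * M * ‖q‖ ^ (n+1) := by ring
  have hsum : Summable term := by
    apply Summable.of_norm_bounded ?_ hKM
    simpa [pow_succ, mul_comm, mul_assoc, mul_left_comm] using
      (((summable_geometric_of_lt_one (norm_nonneg q) hq).mul_left
        (K * M * ‖q‖)) : Summable fun n => K * M * ‖q‖ * ‖q‖ ^ n)
  have hsum_g : Summable (fun n => a n - a (n + 1)) := by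
    apply Summable.congr (hsum.mul_left c)
    intro n; exact (key n).symm
  -- telescoping limit
  have hta : Filter.Tendsto a Filter.atTop (nhds (NL / DL)) :=
    htN.div htD (by simpa using hdenInf)
  have ha0 : a 0 = 1 := by
    rw [ha]; simp [hN, hD, qPoch]
  have hpartial : Filter.Tendsto (fun n => ∑ i ∈ Finset.range n, (a i - a (i+1)))
      Filter.atTop (nhds (1 - NL / DL)) := by
    have : (fun n => ∑ i ∈ Finset.range n, (a i - a (i+1))) = fun n => a 0 - a n := by
      funext n; exact Finset.sum_range_sub' a n
    rw [this, ha0]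
    exact tendsto_const_nhds.sub hta
  have htsum_g : (∑' n, (a n - a (n + 1))) = 1 - NL / DL :=
    tendsto_nhds_unique hsum_g.hasSum.tendsto_sum_nat hpartial
  have hmain : c * (∑' n, term n) = 1 - NL / DL := by
    rw [← htsum_g, ← tsum_mul_left]
    congr 1
    funext n
    exact (key n).symm
  have : (∑' n, term n) = 1 / c * (1 - NL / DL) := by
    rw [one_div, inv_mul_eq_div, eq_div_iff hc, mul_comm]
    exact hmain
  simpa [hterm, hNL, hDL] using this
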